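/- Let φ : [0, η) → [0, ∞) be concave and differentiable on (0, η) with φ' > 0, and let (rₖ) be a positive nonincreasing sequence with rₖ < η. Suppose for all k ≥ k₀: φ'(rₖ)(rₖ − r_{k+1}) ≥ m‖x^{k+1} − xᵏ‖ for some m > 0 and a sequence (xᵏ) in a Hilbert space converging to x*. Then by concavity φ(rₖ) − φ(r_{k+1}) ≥ φ'(rₖ)(rₖ − r_{k+1}) ≥ m‖x^{k+1} − xᵏ‖, and summing: ‖x* − xᵏ‖ ≤ Σ_{n=k}^{∞} ‖x^{n+1} − xⁿ‖ ≤ (1/m)φ(rₖ) for all k ≥ k₀. -/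
import Mathlib


theorem stmt_19 {H : Type*} [NormedAddCommGroup H] [InnerProductSpace ℝ H]
    (η : ℝ) (hη : 0 < η) (φ φ' : ℝ → ℝ)
    (hconc : ConcaveOn ℝ (Set.Ico 0 η) φ) (hφ0 : φ 0 = 0)
    (hφnonneg : ∀ t ∈ Set.Ioo 0 η, 0 ≤ φ t)
    (hderiv : ∀ t ∈ Set.Ioo 0 η, HasDerivAt φ (φ' t) t)
    (hφ'pos : ∀ t ∈ Set.Ioo 0 η, 0 < φ' t)
    (r : ℕ → ℝ) (x : ℕ → H) (xstar : H) (m : ℝ) (k₀ : ℕ) (hm : 0 < m)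
    (hrpos : ∀ k, 0 < r k) (hrmono : ∀ k, r (k + 1) ≤ r k) (hrlt : ∀ k, r k < η)
    (hx : Filter.Tendsto x Filter.atTop (nhds xstar))
    (hineq : ∀ k ≥ k₀, φ' (r k) * (r k - r (k + 1)) ≥ m * ‖x (k + 1) - x k‖) :
    (∀ k ≥ k₀, m * ‖x (k + 1) - x k‖ ≤ φ (r k) - φ (r (k + 1))) ∧
    ∀ k ≥ k₀, ‖xstar - x k‖ ≤ (1 / m) * φ (r k) := by
  have hmem : ∀ k, r k ∈ Set.Ico 0 η := fun k => ⟨(hrpos k).le, hrlt k⟩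
  have h1 : ∀ k ≥ k₀, m * ‖x (k + 1) - x k‖ ≤ φ (r k) - φ (r (k + 1)) := by
    intro k hk
    rcases eq_or_lt_of_le (hrmono k) with heq | hlt
    · have h0 : m * ‖x (k + 1) - x k‖ ≤ 0 := by
        have := hineq k hk
        rw [heq] at this
        simpa using this
      simp [heq]
      linarith
    · have hs : φ' (r k) ≤ slope φ (r (k + 1)) (r k) :=
        hconc.le_slope_of_hasDerivAt (hmem (k + 1)) (hmem k) hlt
          (hderiv (r k) ⟨hrpos k, hrlt k⟩)
      rw [slope_def_field, div_eq_inv_mul] at hs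
      have hd : 0 < r k - r (k + 1) := by linarith
      have := mul_le_mul_of_nonneg_right hs hd.le
      calc m * ‖x (k + 1) - x k‖ ≤ φ' (r k) * (r k - r (k + 1)) := hineq k hk
        _ ≤ (r k - r (k + 1))⁻¹ * (φ (r k) - φ (r (k + 1))) * (r k - r (k + 1)) := this
        _ = φ (r k) - φ (r (k + 1)) := by field_simp
  refine ⟨h1, fun k hk => ?_⟩
  -- telescoping bound
  have key : ∀ N, k ≤ N → m * ‖x N - x k‖ ≤ φ (r k) - φ (r N) := by
    intro N hN
    induction N with
    | zero => simp_all
    | succ n ih =>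
      rcases eq_or_lt_of_le hN with heq | hlt
      · rw [← heq]; simp
      · have hn : k ≤ n := Nat.lt_succ_iff.mp hlt
        have h2 := h1 n (le_trans hk hn)
        calc m * ‖x (n + 1) - x k‖ ≤ m * (‖x (n + 1) - x n‖ + ‖x n - x k‖) := by
              have := norm_sub_le_norm_sub_add_norm_sub (x (n + 1)) (x n) (x k)
              nlinarith [norm_nonneg (x (n+1) - x k)]
          _ = m * ‖x (n + 1) - x n‖ + m * ‖x n - x k‖ := by ring
          _ ≤ (φ (r n) - φ (r (n + 1))) + (φ (r k) - φ (r n)) := add_le_add h2 (ih hn)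
          _ = φ (r k) - φ (r (n + 1)) := by ring
  have key2 : ∀ N, k ≤ N → ‖x N - x k‖ ≤ (1 / m) * φ (r k) := by
    intro N hN
    have hnn := hφnonneg (r N) ⟨hrpos N, hrlt N⟩
    have := key N hN
    rw [div_mul_eq_mul_div, le_div_iff₀ hm, mul_comm]
    linarith
  have htend : Filter.Tendsto (fun N => ‖x N - x k‖) Filter.atTop (nhds ‖xstar - x k‖) :=
    ((hx.sub tendsto_const_nhds).norm)
  exact le_of_tendsto htend (Filter.eventually_atTop.mpr ⟨k, key2⟩)
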